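/- Every E_3-learnable countable family of pairwise nonisomorphic structures is PL-learnable: if there is a map Γ from structures to ℕ → (ℕ → ℕ), continuous on LD(K), such that for all R, R' ∈ LD(K), R ≅ R' iff Γ R E_3 Γ R', then some learner PL-learns K. -/

import Mathlib

/-- A structure on domain ℕ: a binary relation given as a map to `Bool`. -/
abbrev Struc := ℕ → ℕ → Bool

/-- The restrictions of `R` and `R'` to `{0,…,s} × {0,…,s}` agree. -/
def restrEq (R R' : Struc) (s : ℕ) : Prop :=
  ∀ x ≤ s, ∀ y ≤ s, R x y = R' x y

/-- `R` and `R'` are isomorphic structures. -/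
def Isom (R R' : Struc) : Prop :=
  ∃ e : ℕ ≃ ℕ, ∀ x y, R' (e x) (e y) = R x y

/-- `R↾s` embeds into `R'`: there is a map injective on `{0,…,s}` preserving the relation. -/
def EmbedsRestr (R : Struc) (s : ℕ) (R' : Struc) : Prop :=
  ∃ h : ℕ → ℕ, (∀ x ≤ s, ∀ y ≤ s, h x = h y → x = y) ∧
    (∀ x ≤ s, ∀ y ≤ s, R' (h x) (h y) = R x y)

/-- The learning domain of a family: all isomorphic copies of members of the family. -/
def LD {I : Type} (A : I → Struc) : Set Struc := {R | ∃ i, Isom R (A i)}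

/-- A learner: its conjecture at stage `s` depends only on `R↾s`. -/
def IsLearner {I : Type} (M : Struc → ℕ → Option I) : Prop :=
  ∀ R R' s, restrEq R R' s → M R s = M R' s

/-- `M` Ex-learns the family `A`. -/
def ExLearns {I : Type} (A : I → Struc) (M : Struc → ℕ → Option I) : Prop :=
  ∀ R i, Isom R (A i) → ∃ s₀, ∀ s ≥ s₀, M R s = some i

/-- `M` Fin-learns the family `A`. -/
def FinLearns {I : Type} (A : I → Struc) (M : Struc → ℕ → Option I) : Prop :=
  ∀ R i, Isom R (A i) →
    ∃ s₀, (∀ s < s₀, M R s = none) ∧ (∀ s ≥ s₀, M R s = some i)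

/-- `M` co-learns the family `A`. -/
def CoLearns {I : Type} (A : I → Struc) (M : Struc → ℕ → Option I) : Prop :=
  ∀ R i, Isom R (A i) → ∀ j, (∃ s, M R s = some j) ↔ j ≠ i

/-- `M` nUs-learns the family `A`: it Ex-learns it and never abandons the correct conjecture. -/
def NUsLearns {I : Type} (A : I → Struc) (M : Struc → ℕ → Option I) : Prop :=
  ExLearns A M ∧
    ∀ R i, Isom R (A i) → ∀ s, M R s = some i → ∀ t ≥ s, M R t = some i

/-- `M` Dec-learns the family `A`: it Ex-learns it and never repeats an abandoned conjecture. -/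
def DecLearns {I : Type} (A : I → Struc) (M : Struc → ℕ → Option I) : Prop :=
  ExLearns A M ∧
    ∀ R ∈ LD A, ∀ (j : I) (s : ℕ), M R s = some j → M R (s + 1) ≠ some j →
      ∀ t > s, M R t ≠ some j

/-- `M` PL-learns the family `A`: the unique conjecture output infinitely often is correct. -/
def PLLearns {I : Type} (A : I → Struc) (M : Struc → ℕ → Option I) : Prop :=
  ∀ R ∈ LD A, ∀ i, {s | M R s = some i}.Infinite ↔ Isom R (A i)

/-- The relation `E₀` on Baire space: eventual agreement. -/
def E0 (p q : ℕ → ℕ) : Prop := ∃ m, ∀ n ≥ m, p n = q n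

/-- The relation `E₃` on `ℕ → (ℕ → ℕ)`: columnwise `E₀`. -/
def E3 (p q : ℕ → ℕ → ℕ) : Prop := ∀ m, E0 (p m) (q m)

/-- The relation `E_range` on Baire space: equality of ranges. -/
def Erange (p q : ℕ → ℕ) : Prop := Set.range p = Set.range q

namespace E3PL

open scoped Classical

theorem restrEq_refl (R : Struc) (s : ℕ) : restrEq R R s := fun _ _ _ _ => rfl

theorem restrEq_mono {R R' : Struc} {s s' : ℕ} (h : restrEq R R' s) (hle : s' ≤ s) :
    restrEq R R' s' := fun x hx y hy => h x (hx.trans hle) y (hy.trans hle)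

theorem restrEq_symm {R R' : Struc} {s : ℕ} (h : restrEq R R' s) : restrEq R' R s :=
  fun x hx y hy => (h x hx y hy).symm

theorem restrEq_trans {R1 R2 R3 : Struc} {s : ℕ} (h : restrEq R1 R2 s) (h' : restrEq R2 R3 s) :
    restrEq R1 R3 s := fun x hx y hy => (h x hx y hy).trans (h' x hx y hy)

theorem isom_refl (R : Struc) : Isom R R := ⟨Equiv.refl ℕ, fun _ _ => rfl⟩

theorem isom_symm {R R' : Struc} (h : Isom R R') : Isom R' R := by
  obtain ⟨e, he⟩ := h
  exact ⟨e.symm, fun x y => by simpa using (he (e.symm x) (e.symm y)).symm⟩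

theorem isom_trans {R1 R2 R3 : Struc} (h : Isom R1 R2) (h' : Isom R2 R3) : Isom R1 R3 := by
  obtain ⟨e1, he1⟩ := h; obtain ⟨e2, he2⟩ := h'
  exact ⟨e1.trans e2, fun x y => by simpa using (he2 (e1 x) (e1 y)).trans (he1 x y)⟩

/-- decode a code back to an index -/
noncomputable def pick {I : Type} (enc : I → ℕ) (n : ℕ) : Option I :=
  if h : ∃ j, enc j = n then some h.choose else none

theorem pick_enc {I : Type} {enc : I → ℕ} (he : Function.Injective enc) (j : I) :
    pick enc (enc j) = some j := by
  unfold pick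
  rw [dif_pos ⟨j, rfl⟩]
  exact congrArg some (he (⟨j, rfl⟩ : ∃ p, enc p = enc j).choose_spec)

theorem pick_eq_some {I : Type} {enc : I → ℕ} {n : ℕ} {j : I}
    (h : pick enc n = some j) : enc j = n := by
  unfold pick at h
  split_ifs at h with hex
  obtain rfl : hex.choose = j := Option.some.inj h
  exact hex.choose_spec

theorem nat_unbounded_infinite {S : Set ℕ} (h : ∀ k, ∃ n, k ≤ n ∧ n ∈ S) : S.Infinite := by
  by_contra hfin
  rw [Set.not_infinite] at hfin
  obtain ⟨b, hb⟩ := hfin.bddAbove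
  obtain ⟨n, hn, hmem⟩ := h (b + 1)
  exact absurd (hb hmem) (by omega)

section Aux

variable {I : Type} (A : I → Struc) (Γ : Struc → ℕ → ℕ → ℕ)

/-- The set of possible values of `Γ R' m n` over all `R' ∈ LD A` agreeing with `R` up to `s`. -/
def valSet (R : Struc) (s m n : ℕ) : Set ℕ :=
  {v | ∃ R', R' ∈ LD A ∧ restrEq R R' s ∧ Γ R' m n = v}

theorem self_mem_valSet {R : Struc} (hR : R ∈ LD A) (s m n : ℕ) :
    Γ R m n ∈ valSet A Γ R s m n := ⟨R, hR, restrEq_refl R s, rfl⟩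

theorem valSet_congr {R R'' : Struc} {s : ℕ} (h : restrEq R R'' s) {s' : ℕ} (hle : s' ≤ s)
    (m n : ℕ) : valSet A Γ R s' m n = valSet A Γ R'' s' m n := by
  have h' := restrEq_mono h hle
  ext v
  constructor
  · rintro ⟨S, hS, hres, hval⟩
    exact ⟨S, hS, restrEq_trans (restrEq_symm h') hres, hval⟩
  · rintro ⟨S, hS, hres, hval⟩
    exact ⟨S, hS, restrEq_trans h' hres, hval⟩

theorem valSet_antitone {R : Struc} {s s' : ℕ} (hle : s ≤ s') (m n : ℕ) :
    valSet A Γ R s' m n ⊆ valSet A Γ R s m n := by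
  rintro v ⟨S, hS, hres, hval⟩
  exact ⟨S, hS, restrEq_mono hres hle, hval⟩

/-- A certified visible disagreement with target `q` at column `m`, point `n`, stage `s`. -/
def visDis (R : Struc) (q : ℕ → ℕ → ℕ) (m n s : ℕ) : Prop :=
  ∃ w, valSet A Γ R s m n = {w} ∧ w ≠ q m n

theorem visDis_w {R : Struc} (hR : R ∈ LD A) {q : ℕ → ℕ → ℕ} {m n s : ℕ}
    (h : visDis A Γ R q m n s) :
    valSet A Γ R s m n = {Γ R m n} ∧ Γ R m n ≠ q m n := by
  obtain ⟨w, hw, hne⟩ := h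
  have hmem := self_mem_valSet A Γ hR s m n
  rw [hw, Set.mem_singleton_iff] at hmem
  rw [← hmem] at hw hne
  exact ⟨hw, hne⟩

theorem visDis_mono {R : Struc} (hR : R ∈ LD A) {q : ℕ → ℕ → ℕ} {m n s s' : ℕ} (hle : s ≤ s')
    (h : visDis A Γ R q m n s) : visDis A Γ R q m n s' := by
  obtain ⟨hw, hne⟩ := visDis_w A Γ hR h
  refine ⟨Γ R m n, Set.Subset.antisymm ?_ ?_, hne⟩
  · intro v hv
    have := valSet_antitone A Γ hle m n hv
    rw [hw] at this
    exact this
  · intro v hv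
    rw [Set.mem_singleton_iff] at hv
    rw [hv]
    exact self_mem_valSet A Γ hR s' m n

/-- number of visible disagreements with target `q` in column `m` at stage `s` -/
noncomputable def cnt (R : Struc) (q : ℕ → ℕ → ℕ) (m s : ℕ) : ℕ :=
  ((Finset.range (s + 1)).filter fun n => visDis A Γ R q m n s).card

theorem cnt_congr {R R'' : Struc} {s : ℕ} (h : restrEq R R'' s) (q : ℕ → ℕ → ℕ) (m : ℕ)
    {s' : ℕ} (hle : s' ≤ s) : cnt A Γ R q m s' = cnt A Γ R'' q m s' := by
  unfold cnt
  congr 1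
  apply Finset.filter_congr
  intro n _
  unfold visDis
  rw [valSet_congr A Γ h hle m n]

theorem cnt_mono {R : Struc} (hR : R ∈ LD A) (q : ℕ → ℕ → ℕ) (m : ℕ) {s s' : ℕ}
    (hle : s ≤ s') : cnt A Γ R q m s ≤ cnt A Γ R q m s' := by
  apply Finset.card_le_card
  intro x hx
  simp only [Finset.mem_filter, Finset.mem_range] at hx ⊢
  exact ⟨by omega, visDis_mono A Γ hR hle hx.2⟩

theorem cnt_le {R : Struc} (hR : R ∈ LD A) {q : ℕ → ℕ → ℕ} {m : ℕ}
    (hfin : {n | Γ R m n ≠ q m n}.Finite) (s : ℕ) :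
    cnt A Γ R q m s ≤ hfin.toFinset.card := by
  apply Finset.card_le_card
  intro x hx
  simp only [Finset.mem_filter] at hx
  exact hfin.mem_toFinset.mpr (visDis_w A Γ hR hx.2).2

/-- Continuity gives a modulus for each value of `Γ`. -/
theorem exists_mod (hcont : ContinuousOn Γ (LD A)) {R : Struc} (hR : R ∈ LD A) (m n : ℕ) :
    ∃ s₀ : ℕ, ∀ R' ∈ LD A, restrEq R R' s₀ → Γ R' m n = Γ R m n := by
  have hev : Continuous fun F : ℕ → ℕ → ℕ => F m n :=
    (continuous_apply n).comp (continuous_apply m)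
  have hWopen : IsOpen ((fun F : ℕ → ℕ → ℕ => F m n) ⁻¹' {Γ R m n}) :=
    (isOpen_discrete _).preimage hev
  have h2 : Γ ⁻¹' ((fun F : ℕ → ℕ → ℕ => F m n) ⁻¹' {Γ R m n}) ∈ nhdsWithin R (LD A) :=
    (hcont R hR).preimage_mem_nhdsWithin (hWopen.mem_nhds (by simp))
  obtain ⟨U, hUopen, hRU, hsub⟩ := mem_nhdsWithin.mp h2
  obtain ⟨F1, u, hu, hpi⟩ := isOpen_pi_iff.mp hUopen R hRU
  have hstep : ∀ x ∈ F1, ∃ k : ℕ, ∀ g : ℕ → Bool, (∀ y, y ≤ k → g y = R x y) → g ∈ u x := by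
    intro x hx
    obtain ⟨F2, w, hw, hpi2⟩ := isOpen_pi_iff.mp (hu x hx).1 (R x) (hu x hx).2
    refine ⟨F2.sup id, fun g hg => hpi2 (Set.mem_pi.mpr fun y hy => ?_)⟩
    have hyF : y ∈ F2 := hy
    rw [hg y (Finset.le_sup (f := id) hyF)]
    exact (hw y hyF).2
  choose! k hk using hstep
  refine ⟨F1.sup id ⊔ F1.sup k, fun R' hR' hre => ?_⟩
  have hU' : R' ∈ U := by
    apply hpi
    refine Set.mem_pi.mpr fun x hx => ?_
    have hxF : x ∈ F1 := hx
    apply hk x hxF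
    intro y hy
    have hxle : x ≤ F1.sup id ⊔ F1.sup k :=
      le_trans (Finset.le_sup (f := id) hxF) le_sup_left
    have hyle : y ≤ F1.sup id ⊔ F1.sup k :=
      le_trans (hy.trans (Finset.le_sup (f := k) hxF)) le_sup_right
    exact (hre x hxle y hyle).symm
  have := hsub ⟨hU', hR'⟩
  simpa using this

theorem valSet_eventually (hcont : ContinuousOn Γ (LD A)) {R : Struc} (hR : R ∈ LD A)
    (m n : ℕ) : ∃ s₀, ∀ s, s₀ ≤ s → valSet A Γ R s m n = {Γ R m n} := by
  obtain ⟨s₀, hs₀⟩ := exists_mod A Γ hcont hR m n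
  refine ⟨s₀, fun s hs => Set.Subset.antisymm ?_ ?_⟩
  · intro v hv
    obtain ⟨S, hS, hres, hval⟩ := valSet_antitone A Γ hs m n hv
    rw [Set.mem_singleton_iff, ← hval]
    exact hs₀ S hS hres
  · intro v hv
    rw [Set.mem_singleton_iff] at hv
    rw [hv]
    exact self_mem_valSet A Γ hR s m n

theorem cnt_large (hcont : ContinuousOn Γ (LD A)) {R : Struc} (hR : R ∈ LD A)
    {q : ℕ → ℕ → ℕ} {m : ℕ} (hinf : {n | Γ R m n ≠ q m n}.Infinite) (N : ℕ) :
    ∃ s₁, ∀ s, s₁ ≤ s → N ≤ cnt A Γ R q m s := by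
  obtain ⟨t, hts, htcard⟩ := hinf.exists_subset_card_eq N
  have hchoice : ∀ n ∈ t, ∃ s₀, ∀ s, s₀ ≤ s → valSet A Γ R s m n = {Γ R m n} :=
    fun n _ => valSet_eventually A Γ hcont hR m n
  choose! σ hσ using hchoice
  refine ⟨t.sup σ ⊔ t.sup id, fun s hs => ?_⟩
  rw [← htcard]
  apply Finset.card_le_card
  intro x hx
  simp only [Finset.mem_filter, Finset.mem_range]
  have hxs : x ≤ s := le_trans (le_trans (Finset.le_sup (f := id) hx) le_sup_right) hs
  refine ⟨by omega, Γ R m x, ?_, hts hx⟩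
  exact hσ x hx s (le_trans (le_trans (Finset.le_sup (f := σ) hx) le_sup_left) hs)

variable (enc : I → ℕ) (mcol : I → I → ℕ)

/-- `j` beats `p` at stage `s`: fewer visible disagreements on the distinguishing column. -/
def beat (R : Struc) (j p : I) (s : ℕ) : Prop :=
  cnt A Γ R (Γ (A j)) (mcol j p) s < cnt A Γ R (Γ (A p)) (mcol j p) s

/-- `j`'s success condition at its `t`-th stage, with pool bound `nb`. -/
def COND (R : Struc) (j : I) (t nb : ℕ) : Prop :=
  ∀ p : I, p ≠ j → enc p ≤ nb → beat A Γ mcol R j p (Nat.pair (enc j) t)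

/-- success count of `j` among its first `t` stages -/
noncomputable def SC (R : Struc) (j : I) : ℕ → ℕ
  | 0 => 0
  | t + 1 => SC R j t + if COND A Γ enc mcol R j t (enc j + SC R j t) then 1 else 0

theorem SC_mono (R : Struc) (j : I) {t t' : ℕ} (hle : t ≤ t') :
    SC A Γ enc mcol R j t ≤ SC A Γ enc mcol R j t' := by
  induction hle with
  | refl => exact le_rfl
  | step h ih => exact ih.trans (Nat.le_add_right _ _)

theorem COND_congr {R R'' : Struc} {s : ℕ} (h : restrEq R R'' s) (j : I) (t nb : ℕ)
    (hst : Nat.pair (enc j) t ≤ s) :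
    COND A Γ enc mcol R j t nb ↔ COND A Γ enc mcol R'' j t nb := by
  unfold COND beat
  constructor
  · intro hc p hp hb
    rw [← cnt_congr A Γ h (Γ (A j)) (mcol j p) hst, ← cnt_congr A Γ h (Γ (A p)) (mcol j p) hst]
    exact hc p hp hb
  · intro hc p hp hb
    rw [cnt_congr A Γ h (Γ (A j)) (mcol j p) hst, cnt_congr A Γ h (Γ (A p)) (mcol j p) hst]
    exact hc p hp hb

theorem SC_congr {R R'' : Struc} {s : ℕ} (h : restrEq R R'' s) (j : I) (t : ℕ)
    (hst : Nat.pair (enc j) t ≤ s) :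
    SC A Γ enc mcol R j t = SC A Γ enc mcol R'' j t := by
  induction t with
  | zero => rfl
  | succ t ih =>
      have hlt : Nat.pair (enc j) t ≤ s :=
        le_trans (Nat.pair_lt_pair_right _ (Nat.lt_succ_self t)).le hst
      have ih' := ih hlt
      show SC A Γ enc mcol R j t + _ = SC A Γ enc mcol R'' j t + _
      rw [ih', if_congr (COND_congr A Γ enc mcol h j t _ hlt) rfl rfl]

/-- the learner -/
noncomputable def learner (R : Struc) (s : ℕ) : Option I :=
  (pick enc (Nat.unpair s).1).bind fun j =>
    if COND A Γ enc mcol R j (Nat.unpair s).2 (enc j + SC A Γ enc mcol R j (Nat.unpair s).2)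
    then some j else none

theorem learner_isLearner : IsLearner (learner A Γ enc mcol) := by
  intro R R' s h
  unfold learner
  cases hdec : pick enc (Nat.unpair s).1 with
  | none => rfl
  | some j =>
      simp only [Option.bind_some]
      have hej : enc j = (Nat.unpair s).1 := pick_eq_some hdec
      have hst : Nat.pair (enc j) (Nat.unpair s).2 = s := by rw [hej, Nat.pair_unpair]
      have hS := SC_congr A Γ enc mcol h j (Nat.unpair s).2 (le_of_eq hst)
      rw [hS, if_congr (COND_congr A Γ enc mcol h j (Nat.unpair s).2 _ (le_of_eq hst)) rfl rfl]

theorem learner_eq_some (he : Function.Injective enc) {R : Struc} {s : ℕ} {j : I} :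
    learner A Γ enc mcol R s = some j ↔
      (Nat.unpair s).1 = enc j ∧
        COND A Γ enc mcol R j (Nat.unpair s).2
          (enc j + SC A Γ enc mcol R j (Nat.unpair s).2) := by
  unfold learner
  rw [Option.bind_eq_some_iff]
  constructor
  · rintro ⟨p, hdec, hif⟩
    split_ifs at hif with hcnd
    obtain rfl := Option.some.inj hif
    exact ⟨(pick_eq_some hdec).symm, hcnd⟩
  · rintro ⟨h1, hcnd⟩
    exact ⟨j, by rw [h1]; exact pick_enc he j, if_pos hcnd⟩

end Aux

theorem infinite_exists_gt {S : Set ℕ} (h : S.Infinite) (a : ℕ) : ∃ b ∈ S, a < b := by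
  by_contra hc
  push_neg at hc
  exact h (Set.Finite.subset (Set.finite_Iic a) hc)

end E3PL

/-- Every `E₃`-learnable countable family of pairwise nonisomorphic structures is
PL-learnable. -/
theorem e3Learnable_to_plLearnable {I : Type} [Countable I] (A : I → Struc)
    (hA : ∀ i j, i ≠ j → ¬ Isom (A i) (A j))
    (h : ∃ Γ : Struc → (ℕ → ℕ → ℕ), ContinuousOn Γ (LD A) ∧
        ∀ R ∈ LD A, ∀ R' ∈ LD A, (Isom R R' ↔ E3 (Γ R) (Γ R'))) :
    ∃ M : Struc → ℕ → Option I, IsLearner M ∧ PLLearns A M := by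
  classical
  obtain ⟨Γ, hcont, hiff⟩ := h
  obtain ⟨enc, henc⟩ := Countable.exists_injective_nat I
  have hmem : ∀ i : I, A i ∈ LD A := fun i => ⟨i, E3PL.isom_refl _⟩
  have hcol : ∀ j p : I, ∃ m, j ≠ p → ∀ k, ∃ n, k ≤ n ∧ Γ (A j) m n ≠ Γ (A p) m n := by
    intro j p
    by_cases hjp : j = p
    · exact ⟨0, fun hne => absurd hjp hne⟩
    · have hnE3 : ¬ E3 (Γ (A j)) (Γ (A p)) :=
        fun hE3 => hA j p hjp ((hiff _ (hmem j) _ (hmem p)).mpr hE3)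
      unfold E3 E0 at hnE3
      push_neg at hnE3
      obtain ⟨m, hm⟩ := hnE3
      exact ⟨m, fun _ k => by obtain ⟨n, hn1, hn2⟩ := hm k; exact ⟨n, hn1, hn2⟩⟩
  choose mcol hmcol using hcol
  refine ⟨E3PL.learner A Γ enc mcol, E3PL.learner_isLearner A Γ enc mcol, ?_⟩
  intro R hR i
  obtain ⟨i₀, hRi₀⟩ := hR
  have hR : R ∈ LD A := ⟨i₀, hRi₀⟩
  have hE3 : E3 (Γ R) (Γ (A i₀)) := (hiff R hR _ (hmem i₀)).mp hRi₀
  have colfin : ∀ m, {n | Γ R m n ≠ Γ (A i₀) m n}.Finite := by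
    intro m
    obtain ⟨k, hk⟩ := hE3 m
    apply Set.Finite.subset (Set.finite_Iio k)
    intro n hn
    simp only [Set.mem_setOf_eq] at hn
    by_contra hlt
    exact hn (hk n (by simpa using hlt))
  have colinf : ∀ (p : I) (m : ℕ), (∀ k, ∃ n, k ≤ n ∧ Γ (A p) m n ≠ Γ (A i₀) m n) →
      {n | Γ R m n ≠ Γ (A p) m n}.Infinite := by
    intro p m hdiff
    obtain ⟨k₀, hk₀⟩ := hE3 m
    apply E3PL.nat_unbounded_infinite
    intro k
    obtain ⟨n, hn1, hn2⟩ := hdiff (max k k₀)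
    refine ⟨n, le_trans (le_max_left _ _) hn1, ?_⟩
    simp only [Set.mem_setOf_eq]
    rw [hk₀ n (le_trans (le_max_right _ _) hn1)]
    exact fun hEq => hn2 hEq.symm
  have K1 : ∀ p : I, p ≠ i₀ → ∃ s₂, ∀ s, s₂ ≤ s → E3PL.beat A Γ mcol R i₀ p s := by
    intro p hp
    have hne : i₀ ≠ p := Ne.symm hp
    have hinf : {n | Γ R (mcol i₀ p) n ≠ Γ (A p) (mcol i₀ p) n}.Infinite :=
      colinf p (mcol i₀ p)
        (fun k => by obtain ⟨n, h1, h2⟩ := hmcol i₀ p hne k; exact ⟨n, h1, h2.symm⟩)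
    have hfin := colfin (mcol i₀ p)
    obtain ⟨s₁, hs₁⟩ := E3PL.cnt_large A Γ hcont hR hinf (hfin.toFinset.card + 1)
    refine ⟨s₁, fun s hs => ?_⟩
    show E3PL.cnt A Γ R (Γ (A i₀)) (mcol i₀ p) s < E3PL.cnt A Γ R (Γ (A p)) (mcol i₀ p) s
    have h1 : E3PL.cnt A Γ R (Γ (A i₀)) (mcol i₀ p) s ≤ hfin.toFinset.card :=
      E3PL.cnt_le A Γ hR hfin s
    have h2 := hs₁ s hs
    omega
  have K2 : ∀ j : I, j ≠ i₀ → ∃ s₂, ∀ s, s₂ ≤ s → ¬ E3PL.beat A Γ mcol R j i₀ s := by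
    intro j hj
    have hinf : {n | Γ R (mcol j i₀) n ≠ Γ (A j) (mcol j i₀) n}.Infinite :=
      colinf j (mcol j i₀) (fun k => hmcol j i₀ hj k)
    have hfin := colfin (mcol j i₀)
    obtain ⟨s₁, hs₁⟩ := E3PL.cnt_large A Γ hcont hR hinf hfin.toFinset.card
    refine ⟨s₁, fun s hs hbeat => ?_⟩
    have hbeat' : E3PL.cnt A Γ R (Γ (A j)) (mcol j i₀) s <
        E3PL.cnt A Γ R (Γ (A i₀)) (mcol j i₀) s := hbeat
    have h1 : E3PL.cnt A Γ R (Γ (A i₀)) (mcol j i₀) s ≤ hfin.toFinset.card :=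
      E3PL.cnt_le A Γ hR hfin s
    have h2 := hs₁ s hs
    omega
  have hout : ∀ (j : I) (s : ℕ), E3PL.learner A Γ enc mcol R s = some j ↔
      ((Nat.unpair s).1 = enc j ∧
        E3PL.COND A Γ enc mcol R j (Nat.unpair s).2
          (enc j + E3PL.SC A Γ enc mcol R j (Nat.unpair s).2)) :=
    fun j s => E3PL.learner_eq_some A Γ enc mcol henc
  set T : I → Set ℕ := fun j =>
    {t | E3PL.COND A Γ enc mcol R j t (enc j + E3PL.SC A Γ enc mcol R j t)} with hTdef
  have SCunb : ∀ j : I, (T j).Infinite →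
      ∀ B, ∃ t₁, ∀ t, t₁ ≤ t → B ≤ enc j + E3PL.SC A Γ enc mcol R j t := by
    intro j hinf B
    have key : ∀ B, ∃ t, B ≤ E3PL.SC A Γ enc mcol R j t := by
      intro B
      induction B with
      | zero => exact ⟨0, Nat.zero_le _⟩
      | succ B ih =>
          obtain ⟨t, ht⟩ := ih
          obtain ⟨t', ht'T, htt'⟩ := E3PL.infinite_exists_gt hinf t
          refine ⟨t' + 1, ?_⟩
          have hstep : E3PL.SC A Γ enc mcol R j (t' + 1)
              = E3PL.SC A Γ enc mcol R j t' + 1 := by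
            show E3PL.SC A Γ enc mcol R j t' + _ = _
            rw [if_pos (show E3PL.COND A Γ enc mcol R j t'
              (enc j + E3PL.SC A Γ enc mcol R j t') from ht'T)]
          have hmono := E3PL.SC_mono A Γ enc mcol R j htt'.le
          omega
    obtain ⟨t₁, ht₁⟩ := key B
    refine ⟨t₁, fun t ht => ?_⟩
    have hmono := E3PL.SC_mono A Γ enc mcol R j ht
    omega
  have main1 : ∀ i : I, i ≠ i₀ → {s | E3PL.learner A Γ enc mcol R s = some i}.Finite := by
    intro i hi
    have hTfin : (T i).Finite := by
      by_contra hTinf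
      replace hTinf : (T i).Infinite := hTinf
      obtain ⟨s₂, hs₂⟩ := K2 i hi
      obtain ⟨t₁, ht₁⟩ := SCunb i hTinf (enc i₀)
      obtain ⟨t, htT, htgt⟩ := E3PL.infinite_exists_gt hTinf (max t₁ s₂)
      have hCOND : E3PL.COND A Γ enc mcol R i t
          (enc i + E3PL.SC A Γ enc mcol R i t) := htT
      have hb := hCOND i₀ (Ne.symm hi)
        (ht₁ t (le_of_lt (lt_of_le_of_lt (le_max_left _ _) htgt)))
      exact hs₂ _ (le_trans (le_of_lt (lt_of_le_of_lt (le_max_right _ _) htgt))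
        (Nat.right_le_pair _ _)) hb
    apply Set.Finite.subset (hTfin.image (fun t => Nat.pair (enc i) t))
    intro s hs
    simp only [Set.mem_setOf_eq] at hs
    obtain ⟨h1, h2⟩ := (hout i s).mp hs
    refine ⟨(Nat.unpair s).2, h2, ?_⟩
    show Nat.pair (enc i) (Nat.unpair s).2 = s
    rw [← h1]
    exact Nat.pair_unpair s
  have main2 : {s | E3PL.learner A Γ enc mcol R s = some i₀}.Infinite := by
    have hTinf : (T i₀).Infinite := by
      by_contra hTfin
      rw [Set.not_infinite] at hTfin
      obtain ⟨ub, hub⟩ := hTfin.bddAbove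
      have hnotT : ∀ t, ub + 1 ≤ t → t ∉ T i₀ := by
        intro t ht hmemT
        have := hub hmemT
        omega
      have hfrozen0 : ∀ t, E3PL.SC A Γ enc mcol R i₀ (ub + 1 + t)
          = E3PL.SC A Γ enc mcol R i₀ (ub + 1) := by
        intro t
        induction t with
        | zero => rfl
        | succ t ih =>
            have hnot : ¬ E3PL.COND A Γ enc mcol R i₀ (ub + 1 + t)
                (enc i₀ + E3PL.SC A Γ enc mcol R i₀ (ub + 1 + t)) :=
              hnotT (ub + 1 + t) (by omega)
            have harg : ub + 1 + (t + 1) = (ub + 1 + t) + 1 := by omega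
            rw [harg]
            show E3PL.SC A Γ enc mcol R i₀ (ub + 1 + t) + _ = _
            rw [if_neg hnot, ih]
            omega
      have hfrozen : ∀ t, ub + 1 ≤ t → E3PL.SC A Γ enc mcol R i₀ t
          = E3PL.SC A Γ enc mcol R i₀ (ub + 1) := by
        intro t ht
        have heq : t = ub + 1 + (t - (ub + 1)) := by omega
        rw [heq]
        exact hfrozen0 _
      set nb := enc i₀ + E3PL.SC A Γ enc mcol R i₀ (ub + 1) with hnb
      have hPfin : {p : I | p ≠ i₀ ∧ enc p ≤ nb}.Finite := by
        apply Set.Finite.subset (Set.Finite.preimage henc.injOn (Set.finite_Iic nb))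
        intro p hp
        exact hp.2
      have hbeats : ∀ p ∈ {p : I | p ≠ i₀ ∧ enc p ≤ nb},
          ∃ s₂, ∀ s, s₂ ≤ s → E3PL.beat A Γ mcol R i₀ p s :=
        fun p hp => K1 p hp.1
      choose! σ hσ using hbeats
      set t := max (ub + 1) (hPfin.toFinset.sup σ) with htdef
      have hfro := hfrozen t (le_max_left _ _)
      have htT : t ∈ T i₀ := by
        show E3PL.COND A Γ enc mcol R i₀ t (enc i₀ + E3PL.SC A Γ enc mcol R i₀ t)
        intro p hp hple
        have hpP : p ∈ {p : I | p ≠ i₀ ∧ enc p ≤ nb} := ⟨hp, by rw [hnb, ← hfro]; exact hple⟩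
        apply hσ p hpP
        have hσle : σ p ≤ hPfin.toFinset.sup σ :=
          Finset.le_sup (hPfin.mem_toFinset.mpr hpP)
        calc σ p ≤ hPfin.toFinset.sup σ := hσle
        _ ≤ t := le_max_right _ _
        _ ≤ Nat.pair (enc i₀) t := Nat.right_le_pair _ _
      exact hnotT t (le_max_left _ _) htT
    have hinj : Set.InjOn (fun t => Nat.pair (enc i₀) t) (T i₀) := by
      intro a _ b _ hab
      have := congrArg (fun x => (Nat.unpair x).2) hab
      simpa using this
    apply Set.Infinite.mono (s := (fun t => Nat.pair (enc i₀) t) '' (T i₀))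
    · rintro s ⟨t, htT, rfl⟩
      simp only [Set.mem_setOf_eq]
      apply (hout i₀ _).mpr
      rw [Nat.unpair_pair]
      exact ⟨rfl, htT⟩
    · exact Set.Infinite.image hinj hTinf
  constructor
  · intro hinf
    by_contra hni
    have hne : i ≠ i₀ := fun he => hni (by rw [he]; exact hRi₀)
    exact hinf (main1 i hne)
  · intro hIso
    have hii : i = i₀ := by
      by_contra hne
      exact hA i i₀ hne (E3PL.isom_trans (E3PL.isom_symm hIso) hRi₀)
    subst hii
    exact main2
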